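/- In a colored formative process, if q^{(ν+1)} ⊋ q^{(ν)} for some place q ∈ A and some ν < ξ, then GE(A) > ν. -/

import Mathlib

/-- The image of a ZF-set under an arbitrary function (classically definable). -/
noncomputable def zImage (f : ZFSet → ZFSet) (X : ZFSet) : ZFSet :=
  @ZFSet.image f (Classical.allZFSetDefinable fun s => f (s 0)) X

/-- `℘*(X) = { Y : Y ⊆ ⋃X ∧ ∀ z ∈ X, z ∩ Y ≠ ∅ }` for ZF-sets. -/
def zPowast (X : ZFSet) : ZFSet :=
  ZFSet.sep (fun Y => ∀ z ∈ X, z ∩ Y ≠ ∅) (ZFSet.powerset (ZFSet.sUnion X))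

/-- A formative process: to each place `q` in the ZF-set `P` of places and each
ordinal `μ ≤ xi` is assigned a block `blk q μ`, pairwise disjoint at each stage,
increasing at successors, continuous at limits, empty at `0` and nonempty at `xi`. -/
structure FormativeProcess where
  P : ZFSet
  xi : Ordinal
  blk : ZFSet → Ordinal → ZFSet
  disj : ∀ p ∈ P, ∀ q ∈ P, p ≠ q → ∀ μ ≤ xi, blk p μ ∩ blk q μ = (∅ : ZFSet)
  mono : ∀ q ∈ P, ∀ ν < xi, blk q ν ⊆ blk q (ν + 1)
  limitc : ∀ q ∈ P, ∀ lam ≤ xi, Order.IsSuccLimit lam →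
    ∀ x : ZFSet, x ∈ blk q lam ↔ ∃ ν < lam, x ∈ blk q ν
  init : ∀ q ∈ P, blk q 0 = (∅ : ZFSet)
  final_ne : ∀ q ∈ P, blk q xi ≠ (∅ : ZFSet)

/-- `⋃P^(ν)`, the union of all blocks at stage `ν`. -/
noncomputable def FormativeProcess.stage (F : FormativeProcess) (ν : Ordinal) : ZFSet :=
  ZFSet.sUnion (zImage (fun q => F.blk q ν) F.P)

/-- `⋃A^(•)`, the union of the final blocks of the places in the node `A`. -/
noncomputable def FormativeProcess.nodeUnion (F : FormativeProcess) (A : ZFSet) : ZFSet :=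
  ZFSet.sUnion (zImage (fun q => F.blk q F.xi) A)

open Classical in
/-- The grand event of a node `A`: the stage `ν < xi` at which `⋃A^(•)` appears,
if any exists, and `xi` otherwise. -/
noncomputable def FormativeProcess.GE (F : FormativeProcess) (A : ZFSet) : Ordinal :=
  if h : ∃ ν, ν < F.xi ∧ F.nodeUnion A ∈ F.stage (ν + 1) ∧ F.nodeUnion A ∉ F.stage ν
  then h.choose else F.xi

/-- A colored formative process: a formative process together with a trace
`ν ↦ A_ν ⊆ P` such that the elements new at stage `ν+1` come from
`℘*(A_ν^(ν))` (prolongation) and the coherence requirement holds: no element of the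
final stage lies in `℘*(A_ν^(ν)) \ ⋃P^(ν+1)`. -/
structure ColoredProcess extends FormativeProcess where
  trace : Ordinal → ZFSet
  trace_sub : ∀ ν < xi, trace ν ⊆ P
  prolong : ∀ ν < xi, ∀ x : ZFSet,
    x ∈ toFormativeProcess.stage (ν + 1) → x ∉ toFormativeProcess.stage ν →
      x ∈ zPowast (zImage (fun q => blk q ν) (trace ν))
  coherent : ∀ ν < xi, ∀ x : ZFSet,
    x ∈ toFormativeProcess.stage xi →
      x ∈ zPowast (zImage (fun q => blk q ν) (trace ν)) →
        x ∈ toFormativeProcess.stage (ν + 1)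


lemma mem_zImage {f : ZFSet → ZFSet} {X y : ZFSet} :
    y ∈ zImage f X ↔ ∃ x ∈ X, f x = y := by
  simp [zImage, ZFSet.mem_image]

lemma FormativeProcess.blk_mono (F : FormativeProcess) {q : ZFSet} (hq : q ∈ F.P)
    {μ₁ μ₂ : Ordinal} (h : μ₁ ≤ μ₂) (h2 : μ₂ ≤ F.xi) : F.blk q μ₁ ⊆ F.blk q μ₂ := by
  induction μ₂ using Ordinal.limitRecOn with
  | zero =>
    obtain rfl := nonpos_iff_eq_zero.mp h
    exact fun x hx => hx
  | add_one ν ih =>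
    rcases eq_or_lt_of_le h with rfl | hlt
    · exact fun x hx => hx
    · have hle : μ₁ ≤ ν := by simpa using hlt
      have hν : ν < F.xi := by simpa using h2
      exact fun x hx => F.mono q hq ν hν (ih hle hν.le hx)
  | limit lam hlam ih =>
    rcases eq_or_lt_of_le h with rfl | hlt
    · exact fun x hx => hx
    · intro x hx
      exact (F.limitc q hq lam h2 hlam x).mpr ⟨μ₁, hlt, hx⟩

/-- In a colored formative process, if the block of some place `q ∈ A` grows strictly
between stages `ν` and `ν+1` for some `ν < ξ`, then `GE(A) > ν`. -/
theorem ColoredProcess.GE_gt_of_block_grows (F : ColoredProcess)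
    (hfin : F.P.toSet.Finite) (A : ZFSet) (hA : A ⊆ F.P) (q : ZFSet) (hq : q ∈ A)
    (ν : Ordinal) (hν : ν < F.xi)
    (hgrow : F.blk q (ν + 1) ≠ F.blk q ν) :
    ν < F.toFormativeProcess.GE A := by
  by_contra hle
  push_neg at hle
  rw [FormativeProcess.GE] at hle
  split_ifs at hle with h
  · obtain ⟨hν₀, hmem, hnot⟩ := h.choose_spec
    set ν₀ := h.choose with hν₀def
    have hqP : q ∈ F.P := hA hq
    -- a witness of growth
    have hsub := F.mono q hqP ν hν
    have hx : ∃ x, x ∈ F.blk q (ν + 1) ∧ x ∉ F.blk q ν := by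
      by_contra hc
      push_neg at hc
      exact hgrow (ZFSet.ext fun x => ⟨hc x, fun hx => hsub hx⟩)
    obtain ⟨x, hx1, hx2⟩ := hx
    have hsucc : ν + 1 ≤ F.xi := by
      rw [Ordinal.add_one_eq_succ]
      exact Order.succ_le_of_lt hν
    have hxxi : x ∈ F.blk q F.xi :=
      F.toFormativeProcess.blk_mono hqP hsucc le_rfl hx1
    have hxu : x ∈ F.toFormativeProcess.nodeUnion A :=
      ZFSet.mem_sUnion.mpr ⟨F.blk q F.xi, mem_zImage.mpr ⟨q, hq, rfl⟩, hxxi⟩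
    -- prolongation at ν₀
    have hpro := F.prolong ν₀ hν₀ _ hmem hnot
    rw [zPowast, ZFSet.mem_sep, ZFSet.mem_powerset] at hpro
    have hxs := hpro.1 hxu
    obtain ⟨b, hb, hxb⟩ := ZFSet.mem_sUnion.mp hxs
    obtain ⟨p, hp, rfl⟩ := mem_zImage.mp hb
    have hpP : p ∈ F.P := F.trace_sub ν₀ hν₀ hp
    have hxpν1 : x ∈ F.blk p (ν + 1) :=
      F.toFormativeProcess.blk_mono hpP (le_trans hle (le_of_lt (Order.lt_add_one_iff.mpr le_rfl : ν < ν + 1))) hsucc hxb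
    by_cases hpq : p = q
    · subst hpq
      exact hx2 (F.toFormativeProcess.blk_mono hpP hle hν.le hxb)
    · have := F.disj p hpP q hqP hpq (ν + 1) hsucc
      have : x ∈ (∅ : ZFSet) := this ▸ ZFSet.mem_inter.mpr ⟨hxpν1, hx1⟩
      exact (ZFSet.notMem_empty x) this
  · exact absurd hν (not_lt.mpr hle)
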